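/- Let p ≡ 1 (mod 8) be a prime, let λ be a multiplicative character of F_p of order 4, write G = G(λ;1) = \sum_{x∈F_p^*} λ(x)e^{2πix/p} with R = Re(G), I = Im(G), and let B_i = \sum_{x∈D_i^{(4,p)}} e^{2πix/p} for the quartic cyclotomic classes D_i^{(4,p)}. Then 16(B_0+B_1)(B_1+B_2)(B_2+B_3)(B_3+B_0) = 1 - 2p + a^2·p, where a is the odd integer with a^2 + b^2 = p and a ≡ -(2/p) (mod 4). -/

import Mathlib

open Finset

lemma stmt14_I_ne_one : Complex.I ≠ 1 := by
  intro h
  have := congrArg Complex.im h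
  simp at this

/-- Elements of `ℤ[i] ⊆ ℂ` have the form `m + n*I`. -/
lemma stmt14_gaussian_form {z : ℂ} (hz : z ∈ Algebra.adjoin ℤ {Complex.I}) :
    ∃ m n : ℤ, z = (m : ℂ) + (n : ℂ) * Complex.I := by
  let S : Subalgebra ℤ ℂ :=
    { carrier := {w : ℂ | ∃ m n : ℤ, w = (m : ℂ) + (n : ℂ) * Complex.I}
      mul_mem' := by
        rintro x y ⟨mx, nx, rfl⟩ ⟨my, ny, rfl⟩
        refine ⟨mx * my - nx * ny, mx * ny + nx * my, ?_⟩
        push_cast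
        linear_combination ((nx : ℂ) * ny) * Complex.I_sq
      add_mem' := by
        rintro x y ⟨mx, nx, rfl⟩ ⟨my, ny, rfl⟩
        exact ⟨mx + my, nx + ny, by push_cast; ring⟩
      one_mem' := ⟨1, 0, by norm_num⟩
      zero_mem' := ⟨0, 0, by norm_num⟩
      algebraMap_mem' := fun r => ⟨r, 0, by simp⟩ }
  have hle : Algebra.adjoin ℤ {Complex.I} ≤ S := by
    apply Algebra.adjoin_le
    rintro x hx
    rw [Set.mem_singleton_iff] at hx
    subst hx
    exact ⟨0, 1, by norm_num⟩
  exact hle hz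

/-- Uniqueness (up to sign) of the odd part in a two-squares representation of a prime. -/
lemma stmt14_sq_uniq {p : ℕ} (hp : p.Prime) (hodd : p % 2 = 1) {A B a b : ℤ}
    (hA : Odd A) (ha : Odd a) (h1 : A ^ 2 + B ^ 2 = (p : ℤ)) (h2 : a ^ 2 + b ^ 2 = (p : ℤ)) :
    A ^ 2 = a ^ 2 := by
  have hp0 : (p : ℤ) ≠ 0 := Int.natCast_ne_zero.mpr hp.pos.ne'
  have hpI : Prime (p : ℤ) := Nat.prime_iff_prime_int.mp hp
  have contra : ∀ E : ℤ, (E = A * a + B * b ∨ E = A * a - B * b) → E = 0 → False := by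
    rintro E (rfl | rfl) hE
    · have h4 : (p : ℤ) * ((p : ℤ) - A ^ 2 - a ^ 2) = 0 := by
        linear_combination (B * b - A * a) * hE + (-b ^ 2) * h1 + (A ^ 2 - (p : ℤ)) * h2
      have h5 : A ^ 2 + a ^ 2 = (p : ℤ) := by
        rcases mul_eq_zero.mp h4 with h | h
        · exact absurd h hp0
        · linarith
      obtain ⟨s, rfl⟩ := hA
      obtain ⟨t, rfl⟩ := ha
      have h6 : 2 * (2 * s ^ 2 + 2 * s + 2 * t ^ 2 + 2 * t + 1) = (p : ℤ) := by
        linear_combination h5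
      omega
    · have h4 : (p : ℤ) * ((p : ℤ) - A ^ 2 - a ^ 2) = 0 := by
        linear_combination (-(B * b + A * a)) * hE + (-b ^ 2) * h1 + (A ^ 2 - (p : ℤ)) * h2
      have h5 : A ^ 2 + a ^ 2 = (p : ℤ) := by
        rcases mul_eq_zero.mp h4 with h | h
        · exact absurd h hp0
        · linarith
      obtain ⟨s, rfl⟩ := hA
      obtain ⟨t, rfl⟩ := ha
      have h6 : 2 * (2 * s ^ 2 + 2 * s + 2 * t ^ 2 + 2 * t + 1) = (p : ℤ) := by
        linear_combination h5
      omega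
  have main : ∀ D : ℤ, (D = A * b - a * B ∨ D = A * b + a * B) → D = 0 → A ^ 2 = a ^ 2 := by
    rintro D (rfl | rfl) hD
    · have h3 : A ^ 2 * (p : ℤ) = a ^ 2 * (p : ℤ) := by
        linear_combination (A * b + a * B) * hD + (-(A ^ 2)) * h2 + a ^ 2 * h1
      exact mul_right_cancel₀ hp0 h3
    · have h3 : A ^ 2 * (p : ℤ) = a ^ 2 * (p : ℤ) := by
        linear_combination (A * b - a * B) * hD + (-(A ^ 2)) * h2 + a ^ 2 * h1
      exact mul_right_cancel₀ hp0 h3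
  have key : (p : ℤ) ∣ (A * b - a * B) * (A * b + a * B) :=
    ⟨b ^ 2 - B ^ 2, by linear_combination b ^ 2 * h1 - B ^ 2 * h2⟩
  rcases hpI.dvd_mul.mp key with hd | hd
  · obtain ⟨k, hk⟩ := hd
    have hsq : (A * b - a * B) ^ 2 + (A * a + B * b) ^ 2 = (p : ℤ) ^ 2 := by
      linear_combination (a ^ 2 + b ^ 2) * h1 + (p : ℤ) * h2
    rcases eq_or_ne k 0 with rfl | hk0
    · exact main _ (Or.inl rfl) (by omega)
    · exfalso
      have hk1 : 1 ≤ k ^ 2 := by nlinarith [Int.one_le_abs hk0, sq_abs k, abs_nonneg k]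
      rw [hk] at hsq
      have hprod : 0 ≤ (p : ℤ) ^ 2 * (k ^ 2 - 1) := mul_nonneg (sq_nonneg _) (by linarith)
      have hE2 : (A * a + B * b) ^ 2 ≤ 0 := by nlinarith [hsq, hprod]
      have hE : A * a + B * b = 0 :=
        (pow_eq_zero_iff (by norm_num : (2:ℕ) ≠ 0)).mp (le_antisymm hE2 (sq_nonneg _))
      exact contra _ (Or.inl rfl) hE
  · obtain ⟨k, hk⟩ := hd
    have hsq : (A * b + a * B) ^ 2 + (A * a - B * b) ^ 2 = (p : ℤ) ^ 2 := by
      linear_combination (a ^ 2 + b ^ 2) * h1 + (p : ℤ) * h2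
    rcases eq_or_ne k 0 with rfl | hk0
    · exact main _ (Or.inr rfl) (by omega)
    · exfalso
      have hk1 : 1 ≤ k ^ 2 := by nlinarith [Int.one_le_abs hk0, sq_abs k, abs_nonneg k]
      rw [hk] at hsq
      have hprod : 0 ≤ (p : ℤ) ^ 2 * (k ^ 2 - 1) := mul_nonneg (sq_nonneg _) (by linarith)
      have hE2 : (A * a - B * b) ^ 2 ≤ 0 := by nlinarith [hsq, hprod]
      have hE : A * a - B * b = 0 :=
        (pow_eq_zero_iff (by norm_num : (2:ℕ) ≠ 0)).mp (le_antisymm hE2 (sq_nonneg _))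
      exact contra _ (Or.inr rfl) hE

/-- Splitting a sum over `range (4*m)` by residues mod 4. -/
lemma stmt14_sum_range_four_mul (m : ℕ) (f : ℕ → ℂ) :
    ∑ j ∈ Finset.range (4 * m), f j
      = ∑ r ∈ Finset.range 4, ∑ k ∈ Finset.range m, f (r + 4 * k) := by
  rw [← Finset.sum_product']
  apply Finset.sum_nbij' (i := fun j => (j % 4, j / 4)) (j := fun rk => rk.1 + 4 * rk.2)
  · intro j hj
    simp only [Finset.mem_range] at hj
    simp only [Finset.mem_product, Finset.mem_range]
    omega
  · intro rk hrk
    simp only [Finset.mem_product, Finset.mem_range] at hrk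
    simp only [Finset.mem_range]
    omega
  · intro j hj
    simp only [Finset.mem_range] at hj
    omega
  · intro rk hrk
    simp only [Finset.mem_product, Finset.mem_range] at hrk
    ext <;> simp <;> omega
  · intro j hj
    congr 1
    omega

/-- Every nonzero element is a power of a primitive root. -/
lemma stmt14_pow_surj (p : ℕ) [Fact p.Prime] (α : ZMod p) (hα : orderOf α = p - 1) :
    ∀ x : ZMod p, x ≠ 0 → ∃ j, j < p - 1 ∧ α ^ j = x := by
  have hp : p.Prime := Fact.out
  have hp1 : 1 < p := hp.one_lt
  have hα1 : α ^ (p - 1) = 1 := by rw [← hα]; exact pow_orderOf_eq_one α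
  have hα0 : α ≠ 0 := by
    intro h
    rw [h, zero_pow (by omega : p - 1 ≠ 0)] at hα1
    exact zero_ne_one hα1
  intro x hx
  set αu : (ZMod p)ˣ := Units.mk0 α hα0 with hαu
  have hou : orderOf αu = p - 1 := by rw [← orderOf_units]; exact hα
  have htop : Subgroup.zpowers αu = ⊤ := by
    rw [← Subgroup.card_eq_iff_eq_top, Nat.card_zpowers, hou, Nat.card_eq_fintype_card,
      ZMod.card_units]
  have hmem : Units.mk0 x hx ∈ Subgroup.zpowers αu := by rw [htop]; exact Subgroup.mem_top _
  obtain ⟨k, hk⟩ := Subgroup.mem_zpowers_iff.mp hmem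
  have hn1 : (0 : ℤ) < ((p : ℤ) - 1) := by omega
  refine ⟨(k % ((p : ℤ) - 1)).toNat, ?_, ?_⟩
  · have h1 := Int.emod_lt_of_pos k hn1
    have h0 := Int.emod_nonneg k hn1.ne'
    omega
  · have h0 := Int.emod_nonneg k hn1.ne'
    have hzp : αu ^ ((k % ((p : ℤ) - 1)).toNat) = Units.mk0 x hx := by
      have hmod : αu ^ (k % ((p : ℤ) - 1)) = αu ^ k := by
        have hcast : ((p : ℤ) - 1) = ((orderOf αu : ℕ) : ℤ) := by rw [hou]; omega
        rw [hcast]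
        exact zpow_mod_orderOf αu k
      rw [← zpow_natCast, Int.toNat_of_nonneg h0, hmod, hk]
    have hval := congrArg (Units.val) hzp
    rwa [Units.val_pow_eq_pow_val] at hval

/-- Existence of a quartic character taking value `I` at a primitive root. -/
lemma stmt14_exists_quartic_char (p : ℕ) [Fact p.Prime] (h4 : 4 ∣ p - 1) (α : ZMod p)
    (hα : orderOf α = p - 1) :
    ∃ χ : MulChar (ZMod p) ℂ, ∀ j : ℕ, χ (α ^ j) = Complex.I ^ j := by
  have hp : p.Prime := Fact.out
  have hp1 : 1 < p := hp.one_lt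
  have hα1 : α ^ (p - 1) = 1 := by rw [← hα]; exact pow_orderOf_eq_one α
  have hα0 : α ≠ 0 := by
    intro h
    rw [h, zero_pow (by omega : p - 1 ≠ 0)] at hα1
    exact zero_ne_one hα1
  set αu : (ZMod p)ˣ := Units.mk0 α hα0 with hαu
  have hou : orderOf αu = p - 1 := by rw [← orderOf_units]; exact hα
  have hprim : IsPrimitiveRoot αu (p - 1) := hou ▸ IsPrimitiveRoot.orderOf αu
  have htop : Subgroup.zpowers αu = ⊤ := by
    rw [← Subgroup.card_eq_iff_eq_top, Nat.card_zpowers, hou, Nat.card_eq_fintype_card,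
      ZMod.card_units]
  have hIunit : IsUnit Complex.I := isUnit_iff_ne_zero.mpr Complex.I_ne_zero
  set Iu : ℂˣ := hIunit.unit with hIudef
  have hIuval : (Iu : ℂ) = Complex.I := hIunit.unit_spec
  have hIu4pow : Iu ^ 4 = 1 := by
    apply Units.ext
    rw [Units.val_pow_eq_pow_val, hIuval, Complex.I_pow_four, Units.val_one]
  have hIu4 : IsPrimitiveRoot Iu 4 := by
    constructor
    · exact hIu4pow
    · intro l hl
      have hl' : Complex.I ^ l = 1 := by
        have hv := congrArg Units.val hl
        rwa [Units.val_pow_eq_pow_val, hIuval, Units.val_one] at hv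
      rw [pow_eq_pow_mod l Complex.I_pow_four] at hl'
      rcases (by omega : l % 4 = 0 ∨ l % 4 = 1 ∨ l % 4 = 2 ∨ l % 4 = 3) with h | h | h | h
      · omega
      · rw [h, pow_one] at hl'
        exact absurd hl' stmt14_I_ne_one
      · rw [h, Complex.I_sq] at hl'
        norm_num at hl'
      · rw [h, pow_succ, Complex.I_sq] at hl'
        exact absurd (by linear_combination (-Complex.I) * hl' - Complex.I_sq : Complex.I = 1)
          stmt14_I_ne_one
  let e := hprim.zmodEquivZPowers
  let e4 := hIu4.zmodEquivZPowers
  let iso1 : (ZMod p)ˣ ≃* Subgroup.zpowers αu :=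
    Subgroup.topEquiv.symm.trans (MulEquiv.subgroupCongr htop.symm)
  let iso2 : Subgroup.zpowers αu ≃* Multiplicative (ZMod (p - 1)) :=
    (AddEquiv.toMultiplicativeLeft e).symm
  let g2 : Multiplicative (ZMod (p - 1)) →* Multiplicative (ZMod 4) :=
    AddMonoidHom.toMultiplicative (ZMod.castHom h4 (ZMod 4)).toAddMonoidHom
  let g3 : Multiplicative (ZMod 4) →* ℂˣ :=
    (Subgroup.zpowers Iu).subtype.comp (AddEquiv.toMultiplicativeLeft e4).toMonoidHom
  let f : (ZMod p)ˣ →* ℂˣ := ((g3.comp g2).comp iso2.toMonoidHom).comp iso1.toMonoidHom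
  have hfα : f αu = Iu := by
    have h2 : ∀ hm : αu ∈ Subgroup.zpowers αu,
        iso2 ⟨αu, hm⟩ = Multiplicative.ofAdd (((1 : ℕ) : ZMod (p - 1))) := by
      intro hm
      show Multiplicative.ofAdd (e.symm (Additive.ofMul (⟨αu, hm⟩ : Subgroup.zpowers αu))) = _
      congr 1
      have hsub : (⟨αu, hm⟩ : Subgroup.zpowers αu)
          = ⟨αu ^ (1 : ℕ), ⟨(1 : ℤ), by simp⟩⟩ := Subtype.ext (pow_one αu).symm
      rw [hsub]
      exact hprim.zmodEquivZPowers_symm_apply_pow' 1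
    have h3 : g2 (Multiplicative.ofAdd (((1 : ℕ) : ZMod (p - 1))))
        = Multiplicative.ofAdd (((1 : ℕ) : ZMod 4)) := by
      show Multiplicative.ofAdd ((ZMod.castHom h4 (ZMod 4)) (((1 : ℕ) : ZMod (p - 1)))) = _
      rw [map_natCast]
    have h4' : g3 (Multiplicative.ofAdd (((1 : ℕ) : ZMod 4))) = Iu := by
      have he4 : e4 (((1 : ℕ) : ZMod 4))
          = Additive.ofMul (⟨Iu ^ (1 : ℤ), 1, rfl⟩ : Subgroup.zpowers Iu) :=
        hIu4.zmodEquivZPowers_apply_coe_nat 1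
      show (((e4 (((1 : ℕ) : ZMod 4))).toMul : Subgroup.zpowers Iu) : ℂˣ) = Iu
      rw [he4]
      simp
    have h1 : iso1 αu = ⟨αu, by rw [htop]; exact Subgroup.mem_top αu⟩ := rfl
    calc f αu = g3 (g2 (iso2 (iso1 αu))) := rfl
      _ = Iu := by rw [h1, h2, h3, h4']
  refine ⟨MulChar.ofUnitHom f, fun j => ?_⟩
  have hval : α ^ j = ((αu ^ j : (ZMod p)ˣ) : ZMod p) := by
    rw [Units.val_pow_eq_pow_val, hαu, Units.val_mk0]
  rw [hval, MulChar.ofUnitHom_coe, map_pow, hfα, Units.val_pow_eq_pow_val, hIuval]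

theorem stmt14 (p : ℕ) [Fact p.Prime] (hp8 : p % 8 = 1)
    (α : ZMod p) (hα : orderOf α = p - 1)
    (B : ℕ → ℂ)
    (hB : ∀ i, B i = ∑ k ∈ Finset.range ((p - 1) / 4),
      Complex.exp (2 * Real.pi * Complex.I * (((α ^ (i + 4 * k)).val : ℂ)) / p))
    (a b : ℤ) (ha : Odd a) (hab : a ^ 2 + b ^ 2 = (p : ℤ))
    (ha4 : (a : ZMod 4) = ((-legendreSym p 2 : ℤ) : ZMod 4)) :
    16 * (B 0 + B 1) * (B 1 + B 2) * (B 2 + B 3) * (B 3 + B 0) =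
      1 - 2 * (p : ℂ) + (a : ℂ) ^ 2 * p := by
  have hp : p.Prime := Fact.out
  have hp2 : 2 ≤ p := hp.two_le
  have hp9 : 9 ≤ p := by
    rcases Nat.lt_or_ge p 9 with h | h
    · interval_cases p <;> simp_all <;> omega
    · exact h
  have h8 : 8 ∣ p - 1 := by omega
  have h4 : 4 ∣ p - 1 := by omega
  haveI : NeZero p := ⟨by omega⟩
  haveI : Fact (1 < p) := ⟨by omega⟩
  set m : ℕ := (p - 1) / 4 with hmdef
  have hm4 : p - 1 = 4 * m := by omega
  have hα1 : α ^ (p - 1) = 1 := by rw [← hα]; exact pow_orderOf_eq_one α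
  have hα0 : α ≠ 0 := by
    intro h
    rw [h, zero_pow (by omega : p - 1 ≠ 0)] at hα1
    exact zero_ne_one hα1
  have hαu : IsUnit α := isUnit_iff_ne_zero.mpr hα0
  have hsurj := stmt14_pow_surj p α hα
  obtain ⟨χ, hχ⟩ := stmt14_exists_quartic_char p h4 α hα
  -- additive character
  have hζ1 : Complex.exp (2 * Real.pi * Complex.I / p) ^ p = 1 := by
    rw [← Complex.exp_nat_mul, mul_div_cancel₀ _ (by exact_mod_cast (by omega : p ≠ 0) : (p : ℂ) ≠ 0)]
    exact Complex.exp_two_pi_mul_I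
  set ψ : AddChar (ZMod p) ℂ := AddChar.zmodChar p hζ1 with hψdef
  have hζprim : IsPrimitiveRoot (Complex.exp (2 * Real.pi * Complex.I / p)) p :=
    Complex.isPrimitiveRoot_exp p (by omega)
  have hψapp : ∀ x : ZMod p, ψ x = Complex.exp (2 * Real.pi * Complex.I / p) ^ x.val :=
    fun x => AddChar.zmodChar_apply hζ1 x
  have hψ1 : ψ ≠ 1 := by
    intro h
    have h1 : ψ (1 : ZMod p) = 1 := by rw [h]; rfl
    rw [hψapp, ZMod.val_one, pow_one] at h1
    exact hζprim.ne_one (by omega) h1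
  have hψ0 : ψ ≠ 0 := by
    intro h
    have h1 : ψ (1 : ZMod p) = 1 := by rw [h]; rfl
    rw [hψapp, ZMod.val_one, pow_one] at h1
    exact hζprim.ne_one (by omega) h1
  have hψprim : ψ.IsPrimitive := AddChar.IsPrimitive.of_ne_one hψ1
  have hψval : ∀ x : ZMod p, ψ x = Complex.exp (2 * Real.pi * Complex.I * (x.val : ℂ) / p) := by
    intro x
    rw [hψapp, ← Complex.exp_nat_mul]
    congr 1
    ring
  have hBψ : ∀ r : ℕ, B r = ∑ k ∈ Finset.range m, ψ (α ^ (r + 4 * k)) := by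
    intro r
    rw [hB r]
    refine Finset.sum_congr rfl fun k _ => ?_
    rw [hψval]
  -- reindexing
  have hreindex : ∀ F : ZMod p → ℂ, F 0 = 0 →
      ∑ x : ZMod p, F x = ∑ j ∈ Finset.range (p - 1), F (α ^ j) := by
    intro F hF0
    rw [Finset.sum_eq_sum_sdiff_singleton_add (Finset.mem_univ (0 : ZMod p)) F, hF0, add_zero]
    refine (Finset.sum_bij (fun (j : ℕ) (_ : j ∈ Finset.range (p - 1)) => α ^ j) ?_ ?_ ?_ ?_).symm
    · intro j hj
      simp only [Finset.mem_sdiff, Finset.mem_univ, Finset.mem_singleton, true_and]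
      exact pow_ne_zero j hα0
    · intro j hj j' hj' h
      simp only [Finset.mem_range] at hj hj'
      exact pow_injOn_Iio_orderOf (by rwa [Set.mem_Iio, hα]) (by rwa [Set.mem_Iio, hα]) h
    · intro x hx
      simp only [Finset.mem_sdiff, Finset.mem_univ, Finset.mem_singleton, true_and] at hx
      obtain ⟨j, hj, hjx⟩ := hsurj x hx
      exact ⟨j, Finset.mem_range.mpr hj, hjx⟩
    · intro j hj
      rfl
  -- key: Gauss sums in terms of the B r
  have key : ∀ (χ' : MulChar (ZMod p) ℂ) (c : ℂ), c ^ 4 = 1 →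
      (∀ j : ℕ, χ' (α ^ j) = c ^ j) →
      gaussSum χ' ψ = ∑ r ∈ Finset.range 4, c ^ r * B r := by
    intro χ' c hc4 hval
    have h0 : gaussSum χ' ψ = ∑ j ∈ Finset.range (p - 1), χ' (α ^ j) * ψ (α ^ j) := by
      rw [gaussSum]
      exact hreindex (fun x => χ' x * ψ x)
        (by show χ' (0 : ZMod p) * ψ 0 = 0; rw [MulChar.map_nonunit χ' not_isUnit_zero, zero_mul])
    rw [h0, hm4, stmt14_sum_range_four_mul]
    refine Finset.sum_congr rfl fun r _ => ?_
    rw [hBψ r, Finset.mul_sum]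
    refine Finset.sum_congr rfl fun k _ => ?_
    rw [hval, pow_add, pow_mul, hc4, one_pow, mul_one]
  -- character facts
  have hχ4 : χ ^ 4 = 1 := by
    apply MulChar.ext
    intro u
    obtain ⟨j, _, hj⟩ := hsurj (u : ZMod p) (Units.ne_zero u)
    rw [← hj, MulChar.pow_apply' χ (by norm_num) _, hχ, MulChar.one_apply (hj ▸ u.isUnit),
      ← pow_mul, mul_comm j 4, pow_mul, Complex.I_pow_four, one_pow]
  have hχα : χ α = Complex.I := by
    have h := hχ 1
    rwa [pow_one, pow_one] at h
  have hχ1 : χ ≠ 1 := by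
    intro h
    rw [h, MulChar.one_apply hαu] at hχα
    exact stmt14_I_ne_one hχα.symm
  have hχχval : ∀ j : ℕ, (χ * χ) (α ^ j) = (-1 : ℂ) ^ j := by
    intro j
    rw [MulChar.mul_apply, hχ, ← mul_pow, Complex.I_mul_I]
  have hχ2 : χ * χ ≠ 1 := by
    intro h
    have hc := hχχval 1
    rw [h, pow_one, pow_one, MulChar.one_apply hαu] at hc
    norm_num at hc
  have hχinvval : ∀ j : ℕ, χ⁻¹ (α ^ j) = (-Complex.I) ^ j := by
    intro j
    rw [MulChar.inv_apply_eq_inv', hχ, ← inv_pow, Complex.inv_I]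
  have honeval : ∀ j : ℕ, (1 : MulChar (ZMod p) ℂ) (α ^ j) = (1 : ℂ) ^ j := by
    intro j
    rw [MulChar.one_apply (hαu.pow j), one_pow]
  have hχneg1 : χ (-1) = 1 := by
    have h2 : (p - 1) / 2 = 4 * ((p - 1) / 8) := by omega
    have hsq : (α ^ ((p - 1) / 2)) * (α ^ ((p - 1) / 2)) = 1 := by
      rw [← pow_add, show (p - 1) / 2 + (p - 1) / 2 = p - 1 by omega]
      exact hα1
    have hne : α ^ ((p - 1) / 2) ≠ 1 := by
      intro h
      have hdvd := orderOf_dvd_of_pow_eq_one h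
      rw [hα] at hdvd
      have := Nat.le_of_dvd (by omega) hdvd
      omega
    have hneg : α ^ ((p - 1) / 2) = -1 := by
      rcases mul_self_eq_one_iff.mp hsq with h | h
      · exact absurd h hne
      · exact h
    rw [← hneg, hχ, h2, pow_mul, Complex.I_pow_four, one_pow]
  have hχinvneg1 : χ⁻¹ (-1) = 1 := by
    rw [MulChar.inv_apply_eq_inv', hχneg1, inv_one]
  -- Gauss sums
  set G := gaussSum χ ψ with hGdef
  set H := gaussSum χ⁻¹ ψ with hHdef
  set g := gaussSum (χ * χ) ψ with hgdef
  have hGB : G = ∑ r ∈ Finset.range 4, Complex.I ^ r * B r :=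
    key χ Complex.I Complex.I_pow_four hχ
  have hHB : H = ∑ r ∈ Finset.range 4, (-Complex.I) ^ r * B r :=
    key χ⁻¹ (-Complex.I)
      (by rw [show ((-Complex.I) ^ 4 : ℂ) = Complex.I ^ 4 by ring, Complex.I_pow_four]) hχinvval
  have hSB : gaussSum 1 ψ = ∑ r ∈ Finset.range 4, (1 : ℂ) ^ r * B r :=
    key 1 1 (one_pow 4) honeval
  -- sum of all B's
  have hsum0 : ∑ x : ZMod p, ψ x = 0 := AddChar.sum_eq_zero_iff_ne_zero.mpr hψ0
  have hgauss1 : gaussSum 1 ψ = -1 := by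
    rw [gaussSum, Finset.sum_eq_sum_sdiff_singleton_add (Finset.mem_univ (0 : ZMod p)),
      MulChar.map_nonunit 1 not_isUnit_zero, zero_mul, add_zero]
    have hrw : ∑ x ∈ Finset.univ \ {(0 : ZMod p)}, (1 : MulChar (ZMod p) ℂ) x * ψ x
        = ∑ x ∈ Finset.univ \ {(0 : ZMod p)}, ψ x := by
      refine Finset.sum_congr rfl fun x hx => ?_
      simp only [Finset.mem_sdiff, Finset.mem_univ, Finset.mem_singleton, true_and] at hx
      rw [MulChar.one_apply (isUnit_iff_ne_zero.mpr hx), one_mul]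
    rw [hrw]
    have hsplit := Finset.sum_eq_sum_sdiff_singleton_add (Finset.mem_univ (0 : ZMod p))
      (fun x => ψ x)
    rw [hsum0, AddChar.map_zero_eq_one] at hsplit
    linear_combination -hsplit
  have hBsum : B 0 + B 1 + B 2 + B 3 = -1 := by
    have h := hSB
    rw [hgauss1] at h
    simp only [Finset.sum_range_succ, Finset.sum_range_zero, one_pow, one_mul, zero_add] at h
    linear_combination -h
  -- G * H = p
  have hGH : G * H = (p : ℂ) := by
    have h1 := gaussSum_mul_gaussSum_eq_card hχ1 hψprim
    have h2 := mul_gaussSum_inv_eq_gaussSum χ⁻¹ ψ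
    rw [hχinvneg1, one_mul] at h2
    rw [h2, ZMod.card] at h1
    exact h1
  -- Jacobi sums
  set J := jacobiSum χ χ with hJdef
  set J' := jacobiSum χ⁻¹ χ⁻¹ with hJ'def
  have hgJ : g * J = G * G := jacobiSum_mul_nontrivial hχ2 ψ
  have hinv2 : χ⁻¹ * χ⁻¹ = χ * χ := by
    have h1 : (χ * χ) * (χ * χ) = 1 := by
      have h2 : χ ^ 4 = (χ * χ) * (χ * χ) := by
        rw [show (4 : ℕ) = 2 * 2 from rfl, pow_mul, sq, sq]
      rw [← h2, hχ4]
    rw [← mul_inv, inv_eq_iff_mul_eq_one]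
    exact h1
  have hχ2' : χ⁻¹ * χ⁻¹ ≠ 1 := by rw [hinv2]; exact hχ2
  have hgJ' : g * J' = H * H := by
    have h := jacobiSum_mul_nontrivial hχ2' ψ
    rwa [hinv2] at h
  have hg2 : g ^ 2 = (p : ℂ) := by
    have hq : (χ * χ).IsQuadratic := by
      intro x
      rcases eq_or_ne x 0 with rfl | hx
      · exact Or.inl (MulChar.map_nonunit _ not_isUnit_zero)
      · obtain ⟨j, _, hj⟩ := hsurj x hx
        rw [← hj, hχχval]
        rcases Nat.even_or_odd j with he | ho
        · exact Or.inr (Or.inl he.neg_one_pow)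
        · exact Or.inr (Or.inr ho.neg_one_pow)
    have h := gaussSum_sq hχ2 hq hψprim
    rw [MulChar.mul_apply, hχneg1, one_mul, one_mul, ZMod.card] at h
    exact h
  have hJJ' : J * J' = (p : ℂ) := by
    have hchar : ringChar ℂ ≠ ringChar (ZMod p) := by
      rw [ringChar.eq_zero, ZMod.ringChar_zmod_n]
      omega
    have h := jacobiSum_mul_jacobiSum_inv hchar hχ1 hχ1 hχ2
    rwa [ZMod.card] at h
  -- J in ℤ[i]
  have hμ4 : IsPrimitiveRoot (Complex.I) 4 := by
    constructor
    · exact Complex.I_pow_four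
    · intro l hl
      rw [pow_eq_pow_mod l Complex.I_pow_four] at hl
      rcases (by omega : l % 4 = 0 ∨ l % 4 = 1 ∨ l % 4 = 2 ∨ l % 4 = 3) with h | h | h | h
      · omega
      · rw [h, pow_one] at hl
        exact absurd hl stmt14_I_ne_one
      · rw [h, Complex.I_sq] at hl
        norm_num at hl
      · rw [h, pow_succ, Complex.I_sq] at hl
        exact absurd (by linear_combination (-Complex.I) * hl - Complex.I_sq : Complex.I = 1)
          stmt14_I_ne_one
  obtain ⟨z, hzmem, hzJ⟩ := exists_jacobiSum_eq_neg_one_add (by norm_num : (2 : ℕ) < 4)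
    hχ4 hχ4 (by rw [ZMod.card]; exact h4) hμ4
  obtain ⟨mz, nz, rfl⟩ := stmt14_gaussian_form hzmem
  set A : ℤ := 2 * nz - 1 with hAdef
  set Bz : ℤ := -2 * mz with hBzdef
  have hJform : J = (A : ℂ) + (Bz : ℂ) * Complex.I := by
    rw [hJdef, hzJ, hAdef, hBzdef]
    push_cast
    linear_combination ((mz : ℂ) - 2 * nz + nz * Complex.I) * Complex.I_sq
  have hAodd : Odd A := ⟨nz - 1, by rw [hAdef]; ring⟩
  have hJ'form : J' = (A : ℂ) - (Bz : ℂ) * Complex.I := by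
    have hcomp : χ.ringHomComp (starRingEnd ℂ) = χ⁻¹ := by
      apply MulChar.ext
      intro u
      obtain ⟨j, _, hj⟩ := hsurj (u : ZMod p) (Units.ne_zero u)
      rw [← hj, MulChar.ringHomComp_apply, hχ, hχinvval, map_pow, Complex.conj_I]
    have hcj := jacobiSum_ringHomComp χ χ (starRingEnd ℂ)
    rw [hcomp] at hcj
    calc J' = (starRingEnd ℂ) J := hcj
      _ = (A : ℂ) - (Bz : ℂ) * Complex.I := by
        rw [hJform, map_add, map_mul, Complex.conj_I, map_intCast, map_intCast]
        ring
  have hABp : A ^ 2 + Bz ^ 2 = (p : ℤ) := by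
    have hc : ((A : ℂ) + (Bz : ℂ) * Complex.I) * ((A : ℂ) - (Bz : ℂ) * Complex.I) = (p : ℂ) := by
      rw [← hJform, ← hJ'form]
      exact hJJ'
    have h2 : ((A ^ 2 + Bz ^ 2 : ℤ) : ℂ) = ((p : ℕ) : ℂ) := by
      push_cast
      linear_combination hc + (Bz : ℂ) ^ 2 * Complex.I_sq
    exact_mod_cast h2
  have hA2 : A ^ 2 = a ^ 2 := stmt14_sq_uniq hp (by omega) hAodd ha hABp hab
  have hG2H2 : G ^ 2 + H ^ 2 = 2 * (A : ℂ) * g := by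
    have hJJsum : J + J' = 2 * (A : ℂ) := by rw [hJform, hJ'form]; ring
    calc G ^ 2 + H ^ 2 = g * (J + J') := by rw [mul_add, hgJ, hgJ']; ring
      _ = 2 * (A : ℂ) * g := by rw [hJJsum]; ring
  -- explicit forms
  have hGx : G = (B 0 - B 2) + (B 1 - B 3) * Complex.I := by
    rw [hGB]
    simp only [Finset.sum_range_succ, Finset.sum_range_zero, zero_add]
    linear_combination (B 2 + B 3 * Complex.I) * Complex.I_sq
  have hHx : H = (B 0 - B 2) - (B 1 - B 3) * Complex.I := by
    rw [hHB]
    simp only [Finset.sum_range_succ, Finset.sum_range_zero, zero_add]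
    linear_combination (B 2 - B 3 * Complex.I) * Complex.I_sq
  have hXY1 : (B 0 - B 2) ^ 2 + (B 1 - B 3) ^ 2 = (p : ℂ) := by
    have h := hGH
    rw [hGx, hHx] at h
    linear_combination h + (B 1 - B 3) ^ 2 * Complex.I_sq
  have hXYg : (B 0 - B 2) ^ 2 - (B 1 - B 3) ^ 2 = (A : ℂ) * g := by
    have h := hG2H2
    rw [hGx, hHx] at h
    linear_combination (1 / 2 : ℂ) * h - (B 1 - B 3) ^ 2 * Complex.I_sq
  have hXY2 : ((B 0 - B 2) ^ 2 - (B 1 - B 3) ^ 2) ^ 2 = (a : ℂ) ^ 2 * (p : ℂ) := by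
    rw [hXYg, mul_pow, hg2]
    have hAa : ((A : ℂ)) ^ 2 = ((a : ℂ)) ^ 2 := by exact_mod_cast congrArg (fun t : ℤ => (t : ℂ)) hA2
    rw [hAa]
  have hB3 : B 3 = -1 - B 0 - B 1 - B 2 := by linear_combination hBsum
  rw [hB3] at hXY1 hXY2 ⊢
  linear_combination (-2 : ℂ) * hXY1 + hXY2
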